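/- arXiv:1101.4787 — 2 statements merged into one kernel-verified Lean document; each statement's English description precedes it below -/
import Mathlib

section
/- Let S be a Γ-hemiring with left and right unities. The map σ ↦ σ⁺′ is a lattice isomorphism from the lattice of fuzzy h-ideals of S (with σ(0)=1) onto the lattice of fuzzy h-ideals of the left operator hemiring L (with μ(0_L)=1); in particular it is an inclusion-preserving bijection satisfying (σ₁ ⊕ σ₂)⁺′ = σ₁⁺′ ⊕ σ₂⁺′ and (σ₁ ∩ σ₂)⁺′ = σ₁⁺′ ∩ σ₂⁺′. -/
open scoped Classical

/-- A `Γ`-hemiring structure on additive commutative monoids `S` and `Γ`. -/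
structure GammaHemiring (S : Type) (Γ : Type) [AddCommMonoid S] [AddCommMonoid Γ] : Type where
  tri : S → Γ → S → S
  add_left : ∀ a b α c, tri (a + b) α c = tri a α c + tri b α c
  add_mid : ∀ a α β b, tri a (α + β) b = tri a α b + tri a β b
  add_right : ∀ a α b c, tri a α (b + c) = tri a α b + tri a α c
  tri_assoc : ∀ a α b β c, tri a α (tri b β c) = tri (tri a α b) β c
  zero_left : ∀ α a, tri 0 α a = 0
  zero_right : ∀ a α, tri a α 0 = 0
  zero_mid : ∀ a b, tri a 0 b = 0

namespace GammaHemiring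

variable {S Γ : Type} [AddCommMonoid S] [AddCommMonoid Γ] (H : GammaHemiring S Γ)

/-- Action of a formal sum `Σ (xᵢ, αᵢ)` on an element of `S`. -/
def lAct (u : Multiset (S × Γ)) (a : S) : S := (u.map fun p => H.tri p.1 p.2 a).sum

/-- The congruence `ρ` on the free additive commutative semigroup on `S × Γ`. -/
def lSetoid : Setoid (Multiset (S × Γ)) where
  r u v := ∀ a, H.lAct u a = H.lAct v a
  iseqv := ⟨fun _ _ => rfl, fun h a => (h a).symm, fun h1 h2 a => (h1 a).trans (h2 a)⟩

/-- The left operator hemiring `L` of a `Γ`-hemiring `S`. -/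
def LOp := Quotient H.lSetoid

/-- Multiplication of formal sums: `(Σ[xᵢ,αᵢ])(Σ[yⱼ,βⱼ]) = Σ[xᵢαᵢyⱼ, βⱼ]`. -/
def lMul (u v : Multiset (S × Γ)) : Multiset (S × Γ) :=
  u.bind fun p => v.map fun q => (H.tri p.1 p.2 q.1, q.2)

lemma lAct_add (u v : Multiset (S × Γ)) (a : S) :
    H.lAct (u + v) a = H.lAct u a + H.lAct v a := by
  simp [lAct]

lemma tri_sum (x : S) (α : Γ) (m : Multiset S) :
    H.tri x α m.sum = (m.map (H.tri x α)).sum := by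
  induction m using Multiset.induction_on with
  | empty => simp [H.zero_right]
  | cons b m ih => simp [H.add_right, ih]

lemma lAct_arg_add (u : Multiset (S × Γ)) (b c : S) :
    H.lAct u (b + c) = H.lAct u b + H.lAct u c := by
  simp only [lAct, H.add_right]
  rw [← Multiset.sum_map_add]

lemma lAct_arg_zero (u : Multiset (S × Γ)) : H.lAct u 0 = 0 := by
  simp [lAct, H.zero_right]

lemma lAct_zero (a : S) : H.lAct 0 a = 0 := by simp [lAct]

lemma lAct_mul (u v : Multiset (S × Γ)) (a : S) :
    H.lAct (H.lMul u v) a = H.lAct u (H.lAct v a) := by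
  unfold lAct lMul
  rw [Multiset.map_bind, Multiset.sum_bind]
  congr 1
  refine Multiset.map_congr rfl ?_
  intro p _
  rw [tri_sum, Multiset.map_map, Multiset.map_map]
  congr 1
  refine Multiset.map_congr rfl ?_
  intro q _
  simp [Function.comp, H.tri_assoc]

noncomputable instance : Add H.LOp :=
  ⟨Quotient.map₂ (· + ·) (fun {u u'} hu {v v'} hv a => by
    rw [lAct_add, lAct_add, hu a, hv a])⟩

noncomputable instance : Zero H.LOp := ⟨Quotient.mk H.lSetoid 0⟩

noncomputable instance : Mul H.LOp :=
  ⟨Quotient.map₂ H.lMul (fun {u u'} hu {v v'} hv a => by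
    rw [lAct_mul, lAct_mul, hv a, hu (H.lAct v' a)])⟩

/-- The left operator hemiring structure. -/
noncomputable instance : NonUnitalSemiring H.LOp where
  add := (· + ·)
  zero := 0
  mul := (· * ·)
  nsmul := nsmulRec
  nsmul_zero := fun _ => rfl
  nsmul_succ := fun _ _ => rfl
  add_assoc a b c := Quotient.inductionOn₃ a b c fun u v w =>
    congrArg (Quotient.mk _) (add_assoc u v w)
  zero_add a := Quotient.inductionOn a fun u => congrArg (Quotient.mk _) (zero_add u)
  add_zero a := Quotient.inductionOn a fun u => congrArg (Quotient.mk _) (add_zero u)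
  add_comm a b := Quotient.inductionOn₂ a b fun u v => congrArg (Quotient.mk _) (add_comm u v)
  left_distrib a b c := Quotient.inductionOn₃ a b c fun u v w => Quotient.sound fun s => by
    simp [lAct_mul, lAct_add, lAct_arg_add]
  right_distrib a b c := Quotient.inductionOn₃ a b c fun u v w => Quotient.sound fun s => by
    simp [lAct_mul, lAct_add]
  zero_mul a := Quotient.inductionOn a fun u => Quotient.sound fun s => by
    simp [lAct_mul, lAct_zero]
  mul_zero a := Quotient.inductionOn a fun u => Quotient.sound fun s => by
    simp [lAct_mul, lAct_zero, lAct_arg_zero]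
  mul_assoc a b c := Quotient.inductionOn₃ a b c fun u v w => Quotient.sound fun s => by
    simp [lAct_mul]

/-- The class of a formal sum in `L`. -/
def lMk (u : Multiset (S × Γ)) : H.LOp := Quotient.mk H.lSetoid u

lemma mk_add (u v : Multiset (S × Γ)) : H.lMk u + H.lMk v = H.lMk (u + v) := rfl

lemma mk_mul (u v : Multiset (S × Γ)) : H.lMk u * H.lMk v = H.lMk (H.lMul u v) := rfl

/-- Action of an element of `L` on `S`. -/
def lActQ : H.LOp → S → S := Quotient.lift H.lAct (fun _ _ h => funext h)

end GammaHemiring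
instance : Fact ((0:ℝ) ≤ 1) := ⟨zero_le_one⟩

/-- Characteristic function of a subset, valued in the unit interval. -/
noncomputable def fuzzyChar {X : Type} (A : Set X) (x : X) : unitInterval :=
  if x ∈ A then 1 else 0

/-- A fuzzy h-ideal of a hemiring. -/
def IsFuzzyHIdeal {T : Type} [NonUnitalSemiring T] (μ : T → unitInterval) : Prop :=
  (∀ x y, μ x ⊓ μ y ≤ μ (x + y)) ∧
  (∀ x y, μ x ⊔ μ y ≤ μ (x * y)) ∧
  (∀ x a b z, x + a + z = b + z → μ a ⊓ μ b ≤ μ x)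

namespace GammaHemiring

variable {S Γ : Type} [AddCommMonoid S] [AddCommMonoid Γ] (H : GammaHemiring S Γ)

/-- A fuzzy h-ideal of a `Γ`-hemiring. -/
def IsGFuzzyHIdeal (μ : S → unitInterval) : Prop :=
  (∀ x y, μ x ⊓ μ y ≤ μ (x + y)) ∧
  (∀ x γ y, μ x ⊔ μ y ≤ μ (H.tri x γ y)) ∧
  (∀ x a b z, x + a + z = b + z → μ a ⊓ μ b ≤ μ x)

/-- For a fuzzy subset `μ` of `L`, the fuzzy subset `μ⁺` of `S`, `μ⁺(x) = inf_γ μ([x,γ])`. -/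
noncomputable def plusMap (μ : H.LOp → unitInterval) (x : S) : unitInterval :=
  ⨅ γ : Γ, μ (H.lMk {(x, γ)})

/-- For a fuzzy subset `σ` of `S`, the fuzzy subset `σ⁺′` of `L`,
`σ⁺′(Σᵢ[xᵢ,αᵢ]) = inf_s σ(Σᵢ xᵢαᵢs)`. -/
noncomputable def plusPrime (σ : S → unitInterval) : H.LOp → unitInterval :=
  Quotient.lift (fun u => ⨅ s : S, σ (H.lAct u s))
    (fun u v h => iInf_congr fun s => by rw [h s])

/-- A left unity of `S`: an element `Σᵢ[eᵢ,δᵢ]` of `L` acting as the identity. -/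
def IsLeftUnity (E : Multiset (S × Γ)) : Prop := ∀ a : S, H.lAct E a = a

/-- A right unity of `S`: a formal sum `Σⱼ[γⱼ,fⱼ]` with `Σⱼ a γⱼ fⱼ = a` for all `a`. -/
def IsRightUnity (E : Multiset (Γ × S)) : Prop :=
  ∀ a : S, ((E.map fun p => H.tri a p.1 p.2).sum) = a

end GammaHemiring
/-- The sum of two fuzzy subsets: `(μ₁ ⊕ μ₂)(x) = sup_{x = u + v} min (μ₁ u) (μ₂ v)`. -/
noncomputable def fuzzySum {T : Type} [Add T] (μ ν : T → unitInterval) (x : T) : unitInterval :=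
  ⨆ p : {p : T × T // x = p.1 + p.2}, μ (p : T × T).1 ⊓ ν (p : T × T).2

section AuxGeneric

lemma unit_top_eq_one : (⊤ : unitInterval) = 1 := le_antisymm unitInterval.le_one' le_top

/-- A fuzzy subset with the additive property, valued `1` at `0`, dominates any lower bound
of the values on a multiset at the multiset's sum. -/
lemma fuzzy_le_sum {T : Type} [AddCommMonoid T] (μ : T → unitInterval)
    (h0 : μ 0 = 1) (hadd : ∀ x y, μ x ⊓ μ y ≤ μ (x + y)) (c : unitInterval) :
    ∀ m : Multiset T, (∀ t ∈ m, c ≤ μ t) → c ≤ μ m.sum := by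
  intro m
  induction m using Multiset.induction_on with
  | empty => intro _; simpa [h0] using unitInterval.le_one'
  | cons a m ih =>
    intro h
    rw [Multiset.sum_cons]
    exact le_trans
      (le_inf (h a (Multiset.mem_cons_self a m)) (ih fun t ht => h t (Multiset.mem_cons_of_mem ht)))
      (hadd _ _)

/-- `fuzzySum` of two fuzzy subsets with the additive property has the additive property. -/
lemma fuzzySum_addp {T : Type} [AddCommMonoid T] (f g : T → unitInterval)
    (hf : ∀ x y, f x ⊓ f y ≤ f (x + y)) (hg : ∀ x y, g x ⊓ g y ≤ g (x + y)) :
    ∀ x y, fuzzySum f g x ⊓ fuzzySum f g y ≤ fuzzySum f g (x + y) := by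
  intro x y
  refine le_of_forall_lt fun c hc => ?_
  have hc1 : c < fuzzySum f g x := lt_of_lt_of_le hc inf_le_left
  have hc2 : c < fuzzySum f g y := lt_of_lt_of_le hc inf_le_right
  rw [fuzzySum, lt_iSup_iff] at hc1 hc2
  obtain ⟨⟨⟨p, q⟩, hpq⟩, h1⟩ := hc1
  obtain ⟨⟨⟨p', q'⟩, hpq'⟩, h2⟩ := hc2
  have hdec : x + y = (p + p') + (q + q') := by
    rw [hpq, hpq']; dsimp only; abel
  have : f (p + p') ⊓ g (q + q') ≤ fuzzySum f g (x + y) :=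
    le_iSup (fun r : {r : T × T // x + y = r.1 + r.2} =>
      f (r : T × T).1 ⊓ g (r : T × T).2) ⟨(p + p', q + q'), hdec⟩
  refine lt_of_lt_of_le ?_ this
  have hfp : c < f (p + p') :=
    lt_of_lt_of_le (lt_inf_iff.mpr ⟨lt_of_lt_of_le h1 inf_le_left,
      lt_of_lt_of_le h2 inf_le_left⟩) (hf _ _)
  have hgq : c < g (q + q') :=
    lt_of_lt_of_le (lt_inf_iff.mpr ⟨lt_of_lt_of_le h1 inf_le_right,
      lt_of_lt_of_le h2 inf_le_right⟩) (hg _ _)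
  exact lt_inf_iff.mpr ⟨hfp, hgq⟩

lemma fuzzySum_zero {T : Type} [AddZeroClass T] (f g : T → unitInterval)
    (hf : f 0 = 1) (hg : g 0 = 1) : fuzzySum f g 0 = 1 := by
  refine le_antisymm unitInterval.le_one' ?_
  have := le_iSup (fun r : {r : T × T // (0 : T) = r.1 + r.2} =>
    f (r : T × T).1 ⊓ g (r : T × T).2) ⟨((0 : T), (0 : T)), (add_zero (0:T)).symm⟩
  simpa [hf, hg, fuzzySum] using this

/-- `fuzzySum` of two fuzzy subsets with the multiplicative (sup) property in a
non-unital semiring has the multiplicative property. -/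
lemma fuzzySum_mulp {T : Type} [NonUnitalSemiring T] (f g : T → unitInterval)
    (hf : ∀ x y, f x ⊔ f y ≤ f (x * y)) (hg : ∀ x y, g x ⊔ g y ≤ g (x * y)) :
    ∀ x y, fuzzySum f g x ⊔ fuzzySum f g y ≤ fuzzySum f g (x * y) := by
  intro x y
  refine sup_le ?_ ?_
  · refine iSup_le fun r => ?_
    obtain ⟨⟨p, q⟩, hpq⟩ := r
    have hdec : x * y = p * y + q * y := by rw [hpq]; dsimp only; rw [add_mul]
    refine le_trans ?_ (le_iSup (fun r : {r : T × T // x * y = r.1 + r.2} =>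
      f (r : T × T).1 ⊓ g (r : T × T).2) ⟨(p * y, q * y), hdec⟩)
    exact inf_le_inf (le_sup_left.trans (hf p y)) (le_sup_left.trans (hg q y))
  · refine iSup_le fun r => ?_
    obtain ⟨⟨p, q⟩, hpq⟩ := r
    have hdec : x * y = x * p + x * q := by rw [hpq]; dsimp only; rw [mul_add]
    refine le_trans ?_ (le_iSup (fun r : {r : T × T // x * y = r.1 + r.2} =>
      f (r : T × T).1 ⊓ g (r : T × T).2) ⟨(x * p, x * q), hdec⟩)
    exact inf_le_inf (le_sup_right.trans (hf x p)) (le_sup_right.trans (hg x q))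

end AuxGeneric

namespace GammaHemiring

variable {S Γ : Type} [AddCommMonoid S] [AddCommMonoid Γ] (H : GammaHemiring S Γ)

lemma pp_mk (σ : S → unitInterval) (u : Multiset (S × Γ)) :
    H.plusPrime σ (H.lMk u) = ⨅ s : S, σ (H.lAct u s) := rfl

lemma lAct_singleton (p : S × Γ) (a : S) : H.lAct {p} a = H.tri p.1 p.2 a := by
  simp [lAct]

lemma tri_sum_left (m : Multiset S) (γ : Γ) (a : S) :
    H.tri m.sum γ a = (m.map fun t => H.tri t γ a).sum := by
  induction m using Multiset.induction_on with
  | empty => simp [H.zero_left]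
  | cons b m ih => simp [H.add_left, ih]

/-- `σ(Σᵢ xᵢαᵢt) ≥ σ(t)` for a fuzzy subset with the additive and triple properties. -/
lemma act_ge (σ : S → unitInterval) (h0 : σ 0 = 1)
    (hadd : ∀ x y, σ x ⊓ σ y ≤ σ (x + y))
    (htri : ∀ x γ y, σ x ⊔ σ y ≤ σ (H.tri x γ y))
    (u : Multiset (S × Γ)) (t : S) : σ t ≤ σ (H.lAct u t) := by
  refine fuzzy_le_sum σ h0 hadd (σ t) _ fun w hw => ?_
  obtain ⟨p, _, rfl⟩ := Multiset.mem_map.mp hw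
  exact le_sup_right.trans (htri p.1 p.2 t)

lemma tri_lAct (u : Multiset (S × Γ)) (s : S) (γ : Γ) (a : S) :
    H.tri (H.lAct u s) γ a = H.lAct u (H.tri s γ a) := by
  rw [lAct, lAct, tri_sum_left, Multiset.map_map]
  exact congrArg Multiset.sum (Multiset.map_congr rfl fun p _ => (H.tri_assoc p.1 p.2 s γ a).symm)

lemma mk_single_act (u : Multiset (S × Γ)) (s : S) (γ : Γ) :
    H.lMk u * H.lMk {(s, γ)} = H.lMk {(H.lAct u s, γ)} := by
  rw [mk_mul]
  refine Quotient.sound fun a => ?_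
  rw [lAct_mul, lAct_singleton, lAct_singleton]
  exact (H.tri_lAct u s γ a).symm

lemma mk_mul_unity (u : Multiset (S × Γ)) {E : Multiset (S × Γ)} (hE : H.IsLeftUnity E) :
    H.lMk u * H.lMk E = H.lMk u := by
  rw [mk_mul]
  exact Quotient.sound fun a => by rw [lAct_mul, hE a]

lemma mk_eq_sum_singles (m : Multiset (S × Γ)) :
    H.lMk m = (m.map fun p => H.lMk {p}).sum := by
  induction m using Multiset.induction_on with
  | empty => rfl
  | cons p m ih =>
    rw [Multiset.map_cons, Multiset.sum_cons, ← ih, mk_add, Multiset.singleton_add]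

lemma mk_zero_single (γ : Γ) : H.lMk {((0 : S), γ)} = 0 := by
  refine Quotient.sound fun a => ?_
  rw [lAct_singleton]
  simp [H.zero_left, lAct]

lemma mk_add_single (x y : S) (γ : Γ) :
    H.lMk {(x + y, γ)} = H.lMk {(x, γ)} + H.lMk {(y, γ)} := by
  rw [mk_add]
  refine Quotient.sound fun a => ?_
  rw [lAct_singleton]
  simp [lAct, H.add_left]

lemma mk_mul_single (x y : S) (γ β : Γ) :
    H.lMk {(x, γ)} * H.lMk {(y, β)} = H.lMk {(H.tri x γ y, β)} := by
  have := H.mk_single_act {(x, γ)} y β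
  rw [this]
  refine Quotient.sound fun a => ?_
  rw [lAct_singleton, lAct_singleton]
  dsimp only
  rw [lAct_singleton]

lemma mk_h_single {x a b z : S} (γ : Γ) (h : x + a + z = b + z) :
    H.lMk {(x, γ)} + H.lMk {(a, γ)} + H.lMk {(z, γ)} =
      H.lMk {(b, γ)} + H.lMk {(z, γ)} := by
  rw [mk_add, mk_add, mk_add]
  refine Quotient.sound fun t => ?_
  have h' : H.tri (x + a + z) γ t = H.tri (b + z) γ t := by rw [h]
  simp only [H.add_left] at h'
  simpa [lAct, add_assoc] using h'

/-- recovery on the `S` side: `(σ⁺′)⁺ = σ`. -/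
lemma plusMap_plusPrime (σ : S → unitInterval) (h0 : σ 0 = 1)
    (hadd : ∀ x y, σ x ⊓ σ y ≤ σ (x + y))
    (htri : ∀ x γ y, σ x ⊔ σ y ≤ σ (H.tri x γ y))
    {E' : Multiset (Γ × S)} (hE' : H.IsRightUnity E') :
    H.plusMap (H.plusPrime σ) = σ := by
  funext x
  have hrw : H.plusMap (H.plusPrime σ) x = ⨅ γ : Γ, ⨅ s : S, σ (H.tri x γ s) := by
    rw [plusMap]
    exact iInf_congr fun γ => by
      rw [pp_mk]; exact iInf_congr fun s => by rw [lAct_singleton]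
  rw [hrw]
  refine le_antisymm ?_ ?_
  · conv_rhs => rw [← hE' x]
    refine fuzzy_le_sum σ h0 hadd _ _ fun w hw => ?_
    obtain ⟨p, _, rfl⟩ := Multiset.mem_map.mp hw
    exact le_trans (iInf_le _ p.1) (iInf_le _ p.2)
  · exact le_iInf fun γ => le_iInf fun s => le_sup_left.trans (htri x γ s)

/-- recovery on the `L` side: `(μ⁺)⁺′ = μ`. -/
lemma plusPrime_plusMap (μ : H.LOp → unitInterval) (h0 : μ 0 = 1)
    (hadd : ∀ x y, μ x ⊓ μ y ≤ μ (x + y))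
    (hmul : ∀ x y, μ x ⊔ μ y ≤ μ (x * y))
    {E : Multiset (S × Γ)} (hE : H.IsLeftUnity E) :
    H.plusPrime (H.plusMap μ) = μ := by
  funext ℓ
  obtain ⟨u, rfl⟩ := Quotient.exists_rep ℓ
  have hrw : H.plusPrime (H.plusMap μ) (H.lMk u) =
      ⨅ s : S, ⨅ γ : Γ, μ (H.lMk u * H.lMk {(s, γ)}) := by
    rw [pp_mk]
    exact iInf_congr fun s => iInf_congr fun γ => by rw [mk_single_act]
  show H.plusPrime (H.plusMap μ) (H.lMk u) = μ (H.lMk u)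
  rw [hrw]
  refine le_antisymm ?_ ?_
  · conv_rhs => rw [← H.mk_mul_unity u hE]
    rw [mk_eq_sum_singles H E, ← Multiset.sum_map_mul_left]
    refine fuzzy_le_sum μ h0 hadd _ _ fun w hw => ?_
    obtain ⟨p, _, rfl⟩ := Multiset.mem_map.mp hw
    exact le_trans (iInf_le _ p.1) (iInf_le _ p.2)
  · exact le_iInf fun s => le_iInf fun γ => le_sup_left.trans (hmul _ _)

/-- `σ⁺′` is a fuzzy h-ideal of `L`, and takes value `1` at `0`. -/
lemma plusPrime_ideal (σ : S → unitInterval) (hσ : H.IsGFuzzyHIdeal σ) (h0 : σ 0 = 1) :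
    IsFuzzyHIdeal (H.plusPrime σ) ∧ H.plusPrime σ 0 = 1 := by
  obtain ⟨hadd, htri, hh⟩ := hσ
  haveI : Nonempty S := ⟨0⟩
  constructor
  · refine ⟨?_, ?_, ?_⟩
    · intro ℓ₁ ℓ₂
      obtain ⟨u, rfl⟩ := Quotient.exists_rep ℓ₁
      obtain ⟨v, rfl⟩ := Quotient.exists_rep ℓ₂
      show H.plusPrime σ (H.lMk u) ⊓ H.plusPrime σ (H.lMk v) ≤
        H.plusPrime σ (H.lMk u + H.lMk v)
      rw [mk_add, pp_mk, pp_mk, pp_mk]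
      refine le_iInf fun s => ?_
      rw [lAct_add]
      exact le_trans (inf_le_inf (iInf_le _ s) (iInf_le _ s)) (hadd _ _)
    · intro ℓ₁ ℓ₂
      obtain ⟨u, rfl⟩ := Quotient.exists_rep ℓ₁
      obtain ⟨v, rfl⟩ := Quotient.exists_rep ℓ₂
      show H.plusPrime σ (H.lMk u) ⊔ H.plusPrime σ (H.lMk v) ≤
        H.plusPrime σ (H.lMk u * H.lMk v)
      rw [mk_mul, pp_mk, pp_mk, pp_mk]
      refine sup_le (le_iInf fun s => ?_) (le_iInf fun s => ?_)
      · rw [lAct_mul]; exact iInf_le _ (H.lAct v s)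
      · rw [lAct_mul]
        exact le_trans (iInf_le _ s) (H.act_ge σ h0 hadd htri u (H.lAct v s))
    · intro x a b z hxz
      obtain ⟨ux, rfl⟩ := Quotient.exists_rep x
      obtain ⟨ua, rfl⟩ := Quotient.exists_rep a
      obtain ⟨ub, rfl⟩ := Quotient.exists_rep b
      obtain ⟨uz, rfl⟩ := Quotient.exists_rep z
      show H.plusPrime σ (H.lMk ua) ⊓ H.plusPrime σ (H.lMk ub) ≤ H.plusPrime σ (H.lMk ux)
      rw [pp_mk, pp_mk, pp_mk]
      refine le_iInf fun s => ?_
      have hq : H.lMk (ux + ua + uz) = H.lMk (ub + uz) := by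
        rw [← mk_add, ← mk_add, ← mk_add]; exact hxz
      have hs := Quotient.exact hq s
      rw [lAct_add, lAct_add, lAct_add] at hs
      exact le_trans (inf_le_inf (iInf_le _ s) (iInf_le _ s))
        (hh (H.lAct ux s) (H.lAct ua s) (H.lAct ub s) (H.lAct uz s) hs)
  · show H.plusPrime σ (H.lMk 0) = 1
    rw [pp_mk]
    have : ∀ s : S, σ (H.lAct 0 s) = 1 := fun s => by rw [lAct_zero, h0]
    simp [this]

/-- `μ⁺` is a fuzzy h-ideal of `S`, and takes value `1` at `0`. -/
lemma plusMap_ideal (μ : H.LOp → unitInterval) (hμ : IsFuzzyHIdeal μ) (h0 : μ 0 = 1) :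
    H.IsGFuzzyHIdeal (H.plusMap μ) ∧ H.plusMap μ 0 = 1 := by
  obtain ⟨hadd, hmul, hh⟩ := hμ
  constructor
  · refine ⟨?_, ?_, ?_⟩
    · intro x y
      refine le_iInf fun γ => ?_
      rw [mk_add_single]
      exact le_trans (inf_le_inf (iInf_le _ γ) (iInf_le _ γ)) (hadd _ _)
    · intro x γ y
      refine le_iInf fun β => ?_
      rw [← mk_mul_single]
      refine sup_le ?_ ?_
      · exact le_trans (iInf_le _ γ) (le_sup_left.trans (hmul _ _))
      · exact le_trans (iInf_le _ β) (le_sup_right.trans (hmul _ _))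
    · intro x a b z hxz
      refine le_iInf fun γ => ?_
      exact le_trans (inf_le_inf (iInf_le _ γ) (iInf_le _ γ))
        (hh _ _ _ (H.lMk {(z, γ)}) (H.mk_h_single γ hxz))
  · refine le_antisymm unitInterval.le_one' (le_iInf fun γ => ?_)
    rw [mk_zero_single, h0]

lemma plusPrime_mono {σ₁ σ₂ : S → unitInterval} (h : σ₁ ≤ σ₂) :
    H.plusPrime σ₁ ≤ H.plusPrime σ₂ := by
  intro ℓ
  obtain ⟨u, rfl⟩ := Quotient.exists_rep ℓ
  show H.plusPrime σ₁ (H.lMk u) ≤ H.plusPrime σ₂ (H.lMk u)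
  rw [pp_mk, pp_mk]
  exact iInf_mono fun s => h _

lemma plusMap_mono {μ₁ μ₂ : H.LOp → unitInterval} (h : μ₁ ≤ μ₂) :
    H.plusMap μ₁ ≤ H.plusMap μ₂ := fun x => iInf_mono fun γ => h _

/-- easy direction: `σ₁⁺′ ⊕ σ₂⁺′ ≤ (σ₁ ⊕ σ₂)⁺′`. -/
lemma fuzzySum_plusPrime_le (σ₁ σ₂ : S → unitInterval) :
    fuzzySum (H.plusPrime σ₁) (H.plusPrime σ₂) ≤ H.plusPrime (fuzzySum σ₁ σ₂) := by
  intro ℓ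
  obtain ⟨u, rfl⟩ := Quotient.exists_rep ℓ
  refine iSup_le fun r => ?_
  obtain ⟨⟨ℓ₁, ℓ₂⟩, hdec⟩ := r
  obtain ⟨v, rfl⟩ := Quotient.exists_rep ℓ₁
  obtain ⟨w, rfl⟩ := Quotient.exists_rep ℓ₂
  dsimp only
  show H.plusPrime σ₁ (H.lMk v) ⊓ H.plusPrime σ₂ (H.lMk w) ≤
    H.plusPrime (fuzzySum σ₁ σ₂) (H.lMk u)
  rw [pp_mk, pp_mk, pp_mk]
  refine le_iInf fun s => ?_
  have hdec' : H.lMk u = H.lMk (v + w) := by rw [← mk_add]; exact hdec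
  have hs : H.lAct u s = H.lAct v s + H.lAct w s := by
    rw [Quotient.exact hdec' s, lAct_add]
  refine le_trans (inf_le_inf (iInf_le _ s) (iInf_le _ s)) ?_
  exact le_iSup (fun r : {r : S × S // H.lAct u s = r.1 + r.2} =>
    σ₁ (r : S × S).1 ⊓ σ₂ (r : S × S).2) ⟨(H.lAct v s, H.lAct w s), hs⟩

/-- easy direction: `μ₁⁺ ⊕ μ₂⁺ ≤ (μ₁ ⊕ μ₂)⁺`. -/
lemma fuzzySum_plusMap_le (μ₁ μ₂ : H.LOp → unitInterval) :
    fuzzySum (H.plusMap μ₁) (H.plusMap μ₂) ≤ H.plusMap (fuzzySum μ₁ μ₂) := by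
  intro x
  refine iSup_le fun r => ?_
  obtain ⟨⟨p, q⟩, hpq⟩ := r
  dsimp only
  refine le_iInf fun γ => ?_
  have hdec : H.lMk {(x, γ)} = H.lMk {(p, γ)} + H.lMk {(q, γ)} := by
    rw [hpq, mk_add_single]
  refine le_trans (inf_le_inf (iInf_le _ γ) (iInf_le _ γ)) ?_
  exact le_iSup (fun r : {r : H.LOp × H.LOp // H.lMk {(x, γ)} = r.1 + r.2} =>
    μ₁ (r : H.LOp × H.LOp).1 ⊓ μ₂ (r : H.LOp × H.LOp).2)
    ⟨(H.lMk {(p, γ)}, H.lMk {(q, γ)}), hdec⟩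

/-- `fuzzySum` of fuzzy subsets with the triple property has the triple property. -/
lemma fuzzySum_trip (f g : S → unitInterval)
    (hf : ∀ x γ y, f x ⊔ f y ≤ f (H.tri x γ y))
    (hg : ∀ x γ y, g x ⊔ g y ≤ g (H.tri x γ y)) :
    ∀ x γ y, fuzzySum f g x ⊔ fuzzySum f g y ≤ fuzzySum f g (H.tri x γ y) := by
  intro x γ y
  refine sup_le ?_ ?_
  · refine iSup_le fun r => ?_
    obtain ⟨⟨p, q⟩, hpq⟩ := r
    have hdec : H.tri x γ y = H.tri p γ y + H.tri q γ y := by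
      rw [hpq]; dsimp only; rw [H.add_left]
    refine le_trans ?_ (le_iSup (fun r : {r : S × S // H.tri x γ y = r.1 + r.2} =>
      f (r : S × S).1 ⊓ g (r : S × S).2) ⟨(H.tri p γ y, H.tri q γ y), hdec⟩)
    exact inf_le_inf (le_sup_left.trans (hf p γ y)) (le_sup_left.trans (hg q γ y))
  · refine iSup_le fun r => ?_
    obtain ⟨⟨p, q⟩, hpq⟩ := r
    have hdec : H.tri x γ y = H.tri x γ p + H.tri x γ q := by
      rw [hpq]; dsimp only; rw [H.add_right]
    refine le_trans ?_ (le_iSup (fun r : {r : S × S // H.tri x γ y = r.1 + r.2} =>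
      f (r : S × S).1 ⊓ g (r : S × S).2) ⟨(H.tri x γ p, H.tri x γ q), hdec⟩)
    exact inf_le_inf (le_sup_right.trans (hf x γ p)) (le_sup_right.trans (hg x γ q))

end GammaHemiring

/-- for `S` with left and right unities, `σ ↦ σ⁺′` is a lattice isomorphism
from the fuzzy h-ideals of `S` (with `σ 0 = 1`) onto the fuzzy h-ideals of `L` (with
`μ 0_L = 1`): it maps into, is injective, surjective, inclusion-preserving in both
directions, and preserves `⊕` and `∩`. -/
theorem plusPrime_lattice_iso {S Γ : Type} [AddCommMonoid S] [AddCommMonoid Γ]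
    (H : GammaHemiring S Γ)
    (E : Multiset (S × Γ)) (hE : H.IsLeftUnity E)
    (E' : Multiset (Γ × S)) (hE' : H.IsRightUnity E') :
    (∀ σ : S → unitInterval, H.IsGFuzzyHIdeal σ ∧ σ 0 = 1 →
      IsFuzzyHIdeal (H.plusPrime σ) ∧ H.plusPrime σ 0 = 1) ∧
    (∀ σ₁ σ₂ : S → unitInterval, (H.IsGFuzzyHIdeal σ₁ ∧ σ₁ 0 = 1) →
      (H.IsGFuzzyHIdeal σ₂ ∧ σ₂ 0 = 1) → H.plusPrime σ₁ = H.plusPrime σ₂ → σ₁ = σ₂) ∧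
    (∀ μ : H.LOp → unitInterval, IsFuzzyHIdeal μ ∧ μ 0 = 1 →
      ∃ σ : S → unitInterval, (H.IsGFuzzyHIdeal σ ∧ σ 0 = 1) ∧ H.plusPrime σ = μ) ∧
    (∀ σ₁ σ₂ : S → unitInterval, (H.IsGFuzzyHIdeal σ₁ ∧ σ₁ 0 = 1) →
      (H.IsGFuzzyHIdeal σ₂ ∧ σ₂ 0 = 1) →
      (σ₁ ≤ σ₂ ↔ H.plusPrime σ₁ ≤ H.plusPrime σ₂)) ∧
    (∀ σ₁ σ₂ : S → unitInterval, (H.IsGFuzzyHIdeal σ₁ ∧ σ₁ 0 = 1) →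
      (H.IsGFuzzyHIdeal σ₂ ∧ σ₂ 0 = 1) →
      H.plusPrime (fuzzySum σ₁ σ₂) = fuzzySum (H.plusPrime σ₁) (H.plusPrime σ₂)) ∧
    (∀ σ₁ σ₂ : S → unitInterval, (H.IsGFuzzyHIdeal σ₁ ∧ σ₁ 0 = 1) →
      (H.IsGFuzzyHIdeal σ₂ ∧ σ₂ 0 = 1) →
      H.plusPrime (σ₁ ⊓ σ₂) = H.plusPrime σ₁ ⊓ H.plusPrime σ₂) := by
  refine ⟨fun σ h => H.plusPrime_ideal σ h.1 h.2, ?_, ?_, ?_, ?_, ?_⟩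
  · -- injectivity
    rintro σ₁ σ₂ ⟨⟨ha1, ht1, -⟩, h01⟩ ⟨⟨ha2, ht2, -⟩, h02⟩ hpp
    rw [← H.plusMap_plusPrime σ₁ h01 ha1 ht1 hE', ← H.plusMap_plusPrime σ₂ h02 ha2 ht2 hE', hpp]
  · -- surjectivity
    rintro μ ⟨hμ, h0⟩
    exact ⟨H.plusMap μ, H.plusMap_ideal μ hμ h0,
      H.plusPrime_plusMap μ h0 hμ.1 hμ.2.1 hE⟩
  · -- order-preserving in both directions
    rintro σ₁ σ₂ ⟨⟨ha1, ht1, -⟩, h01⟩ ⟨⟨ha2, ht2, -⟩, h02⟩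
    refine ⟨fun h => H.plusPrime_mono h, fun h => ?_⟩
    have h2 := H.plusMap_mono h
    rwa [H.plusMap_plusPrime σ₁ h01 ha1 ht1 hE',
      H.plusMap_plusPrime σ₂ h02 ha2 ht2 hE'] at h2
  · -- preserves ⊕
    rintro σ₁ σ₂ ⟨hσ₁, h01⟩ ⟨hσ₂, h02⟩
    obtain ⟨ha1, ht1, hh1⟩ := hσ₁
    obtain ⟨ha2, ht2, hh2⟩ := hσ₂
    obtain ⟨⟨pa1, pm1, -⟩, p01⟩ := H.plusPrime_ideal σ₁ ⟨ha1, ht1, hh1⟩ h01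
    obtain ⟨⟨pa2, pm2, -⟩, p02⟩ := H.plusPrime_ideal σ₂ ⟨ha2, ht2, hh2⟩ h02
    have hAadd := fuzzySum_addp _ _ pa1 pa2
    have hAmul := fuzzySum_mulp _ _ pm1 pm2
    have hA0 : fuzzySum (H.plusPrime σ₁) (H.plusPrime σ₂) 0 = 1 := fuzzySum_zero _ _ p01 p02
    have hSadd := fuzzySum_addp σ₁ σ₂ ha1 ha2
    have hStri := H.fuzzySum_trip σ₁ σ₂ ht1 ht2
    have hS0 : fuzzySum σ₁ σ₂ 0 = 1 := fuzzySum_zero σ₁ σ₂ h01 h02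
    have step2 : H.plusMap (fuzzySum (H.plusPrime σ₁) (H.plusPrime σ₂)) = fuzzySum σ₁ σ₂ := by
      refine le_antisymm ?_ ?_
      · have h2 := H.plusMap_mono (H.fuzzySum_plusPrime_le σ₁ σ₂)
        rwa [H.plusMap_plusPrime (fuzzySum σ₁ σ₂) hS0 hSadd hStri hE'] at h2
      · have h3 := H.fuzzySum_plusMap_le (H.plusPrime σ₁) (H.plusPrime σ₂)
        rwa [H.plusMap_plusPrime σ₁ h01 ha1 ht1 hE',
          H.plusMap_plusPrime σ₂ h02 ha2 ht2 hE'] at h3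
    calc H.plusPrime (fuzzySum σ₁ σ₂)
        = H.plusPrime (H.plusMap (fuzzySum (H.plusPrime σ₁) (H.plusPrime σ₂))) := by rw [step2]
      _ = fuzzySum (H.plusPrime σ₁) (H.plusPrime σ₂) :=
          H.plusPrime_plusMap _ hA0 hAadd hAmul hE
  · -- preserves ∩
    rintro σ₁ σ₂ - -
    funext ℓ
    obtain ⟨u, rfl⟩ := Quotient.exists_rep ℓ
    show H.plusPrime (σ₁ ⊓ σ₂) (H.lMk u) = (H.plusPrime σ₁ ⊓ H.plusPrime σ₂) (H.lMk u)
    rw [Pi.inf_apply, H.pp_mk, H.pp_mk, H.pp_mk]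
    simp only [Pi.inf_apply]
    exact iInf_inf_eq
end

section
/- For any two fuzzy h-ideals μ and ν of a Γ-hemiring S (with left and right unities), (μ ∘_h ν)⁺′ = μ⁺′ ∘_h ν⁺′, where ∘_h denotes the generalized h-product (in S on the left side, and in L on the right side). -/
open scoped Classical

/-- An expression `x + Σᵢ aᵢγᵢbᵢ + z = Σᵢ cᵢδᵢdᵢ + z` in a `Γ`-hemiring. -/
structure GammaHemiring.GExpr {S Γ : Type} [AddCommMonoid S] [AddCommMonoid Γ]
    (H : GammaHemiring S Γ) (x : S) : Type where
  n : ℕ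
  a : Fin (n + 1) → S
  g : Fin (n + 1) → Γ
  b : Fin (n + 1) → S
  c : Fin (n + 1) → S
  e : Fin (n + 1) → Γ
  d : Fin (n + 1) → S
  z : S
  eq : x + (∑ i, H.tri (a i) (g i) (b i)) + z = (∑ i, H.tri (c i) (e i) (d i)) + z

/-- The generalized h-product of fuzzy subsets of a `Γ`-hemiring. -/
noncomputable def GammaHemiring.hProdG {S Γ : Type} [AddCommMonoid S] [AddCommMonoid Γ]
    (H : GammaHemiring S Γ) (μ ν : S → unitInterval) (x : S) : unitInterval :=
  ⨆ e : H.GExpr x, ⨅ i, (μ (e.a i) ⊓ μ (e.c i)) ⊓ (ν (e.b i) ⊓ ν (e.d i))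

/-- An expression `x + Σᵢ aᵢbᵢ + z = Σᵢ cᵢdᵢ + z` in a hemiring. -/
structure HExpr (T : Type) [NonUnitalSemiring T] (x : T) : Type where
  n : ℕ
  a : Fin (n + 1) → T
  b : Fin (n + 1) → T
  c : Fin (n + 1) → T
  d : Fin (n + 1) → T
  z : T
  eq : x + (∑ i, a i * b i) + z = (∑ i, c i * d i) + z

/-- The generalized h-product of fuzzy subsets of a hemiring. -/
noncomputable def hProdH {T : Type} [NonUnitalSemiring T] (μ ν : T → unitInterval)
    (x : T) : unitInterval :=
  ⨆ e : HExpr T x, ⨅ i, (μ (e.a i) ⊓ μ (e.c i)) ⊓ (ν (e.b i) ⊓ ν (e.d i))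
/-! ### Auxiliary machinery for the proof -/

namespace GammaHemiring

variable {S Γ : Type} [AddCommMonoid S] [AddCommMonoid Γ] (H : GammaHemiring S Γ)

/-- `x ↦ x γ t` as an additive monoid hom. -/
def triHom (γ : Γ) (t : S) : S →+ S where
  toFun x := H.tri x γ t
  map_zero' := H.zero_left γ t
  map_add' a b := H.add_left a b γ t

@[simp] lemma triHom_apply (γ : Γ) (t : S) (x : S) : H.triHom γ t x = H.tri x γ t := rfl

/-- `lAct v` as an additive monoid hom in its argument. -/
def lActArgHom (v : Multiset (S × Γ)) : S →+ S where
  toFun := H.lAct v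
  map_zero' := H.lAct_arg_zero v
  map_add' := H.lAct_arg_add v

@[simp] lemma lActArgHom_apply (v : Multiset (S × Γ)) (x : S) : H.lActArgHom v x = H.lAct v x :=
  rfl

lemma lAct_singleton_s10 (x : S) (γ : Γ) (t : S) : H.lAct {(x, γ)} t = H.tri x γ t := by
  simp [lAct]

lemma lAct_tri (v : Multiset (S × Γ)) (x : S) (γ : Γ) (t : S) :
    H.tri (H.lAct v x) γ t = H.lAct v (H.tri x γ t) := by
  induction v using Multiset.induction_on with
  | empty => simp [lAct, H.zero_left]
  | cons p v ih =>
      simp only [lAct, Multiset.map_cons, Multiset.sum_cons] at *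
      rw [H.add_left, ih, ← H.tri_assoc]

/-- `lActQ · s` as an additive monoid hom. -/
noncomputable def lActQHom (s : S) : H.LOp →+ S where
  toFun X := H.lActQ X s
  map_zero' := H.lAct_zero s
  map_add' X Y := Quotient.inductionOn₂ X Y fun u v => H.lAct_add u v s

@[simp] lemma lActQHom_apply (s : S) (X : H.LOp) : H.lActQHom s X = H.lActQ X s := rfl

lemma lActQ_mk (v : Multiset (S × Γ)) (s : S) : H.lActQ (H.lMk v) s = H.lAct v s := rfl

lemma lActQ_mul (X Y : H.LOp) (s : S) : H.lActQ (X * Y) s = H.lActQ X (H.lActQ Y s) :=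
  Quotient.inductionOn₂ X Y fun u v => H.lAct_mul u v s

lemma lActQ_ext {X Y : H.LOp} (h : ∀ s, H.lActQ X s = H.lActQ Y s) : X = Y :=
  Quotient.inductionOn₂ X Y (fun _ _ h => Quotient.sound h) h

lemma plusPrime_mk (σ : S → unitInterval) (v : Multiset (S × Γ)) :
    H.plusPrime σ (H.lMk v) = ⨅ s : S, σ (H.lAct v s) := rfl

lemma plusPrime_zero (σ : S → unitInterval) : H.plusPrime σ 0 = σ 0 := by
  have : H.plusPrime σ 0 = ⨅ s : S, σ (H.lAct 0 s) := rfl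
  simp [this, H.lAct_zero]

/-- A list version of `lAct`. -/
lemma lAct_coe_list (l : List (S × Γ)) (w : S) :
    H.lAct (↑l : Multiset (S × Γ)) w = ∑ j : Fin l.length, H.tri l[(j : ℕ)].1 l[(j : ℕ)].2 w := by
  simp only [lAct, Multiset.map_coe, Multiset.sum_coe]
  exact (Fin.sum_univ_fun_getElem l fun p => H.tri p.1 p.2 w).symm

/-- The key expansion: for a left unity `E` (as a list `l`),
`lAct v w = Σ_j (lAct v eⱼ) δⱼ w`. -/
lemma lAct_expand {l : List (S × Γ)} (hE : ∀ a, H.lAct (↑l : Multiset (S × Γ)) a = a)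
    (v : Multiset (S × Γ)) (w : S) :
    ∑ j : Fin l.length, H.tri (H.lAct v l[(j : ℕ)].1) l[(j : ℕ)].2 w = H.lAct v w := by
  calc ∑ j : Fin l.length, H.tri (H.lAct v l[(j : ℕ)].1) l[(j : ℕ)].2 w
      = ∑ j : Fin l.length, H.lActArgHom v (H.tri l[(j : ℕ)].1 l[(j : ℕ)].2 w) := by
        refine Finset.sum_congr rfl fun j _ => ?_
        rw [lActArgHom_apply, H.lAct_tri]
    _ = H.lActArgHom v (∑ j : Fin l.length, H.tri l[(j : ℕ)].1 l[(j : ℕ)].2 w) :=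
        (map_sum _ _ _).symm
    _ = H.lAct v w := by rw [← H.lAct_coe_list, hE, lActArgHom_apply]

/-- Zero is a "maximal" element for a fuzzy h-ideal. -/
lemma IsGFuzzyHIdeal.le_zero {μ : S → unitInterval} (hμ : H.IsGFuzzyHIdeal μ) (w : S) :
    μ w ≤ μ 0 := by
  simpa using hμ.2.2 0 w w 0 (by simp)

lemma le_plusPrime_single {μ : S → unitInterval} (hμ : H.IsGFuzzyHIdeal μ) (x : S) (γ : Γ) :
    μ x ≤ H.plusPrime μ (H.lMk {(x, γ)}) := by
  rw [plusPrime_mk]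
  refine le_iInf fun t => ?_
  rw [H.lAct_singleton_s10]
  exact le_sup_left.trans (hμ.2.1 x γ t)

end GammaHemiring

/-- Produce a lower bound for `hProdH` from an expression indexed by any nonempty fintype. -/
lemma le_hProdH_of {T : Type} [NonUnitalSemiring T] (μ ν : T → unitInterval) (x : T)
    {ι : Type} [Fintype ι] [Nonempty ι] (a b c d : ι → T) (z : T)
    (heq : x + (∑ i, a i * b i) + z = (∑ i, c i * d i) + z) :
    (⨅ i, (μ (a i) ⊓ μ (c i)) ⊓ (ν (b i) ⊓ ν (d i))) ≤ hProdH μ ν x := by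
  obtain ⟨n, hn⟩ : ∃ n, Fintype.card ι = n + 1 :=
    ⟨Fintype.card ι - 1, (Nat.succ_pred_eq_of_pos Fintype.card_pos).symm⟩
  let eqv : Fin (n + 1) ≃ ι := (Fintype.equivFinOfCardEq hn).symm
  have hsum1 : (∑ i, (a ∘ eqv) i * (b ∘ eqv) i) = ∑ i, a i * b i :=
    Equiv.sum_comp eqv fun i => a i * b i
  have hsum2 : (∑ i, (c ∘ eqv) i * (d ∘ eqv) i) = ∑ i, c i * d i :=
    Equiv.sum_comp eqv fun i => c i * d i
  have key : x + (∑ i, (a ∘ eqv) i * (b ∘ eqv) i) + z = (∑ i, (c ∘ eqv) i * (d ∘ eqv) i) + z := by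
    rw [hsum1, hsum2]; exact heq
  refine le_trans (le_iInf fun j => iInf_le _ (eqv j))
    (le_iSup (fun e : HExpr T x => ⨅ i, (μ (e.a i) ⊓ μ (e.c i)) ⊓ (ν (e.b i) ⊓ ν (e.d i)))
      ⟨n, a ∘ eqv, b ∘ eqv, c ∘ eqv, d ∘ eqv, z, key⟩)

/-- Produce a lower bound for `hProdG` from an expression indexed by any nonempty fintype. -/
lemma le_hProdG_of {S Γ : Type} [AddCommMonoid S] [AddCommMonoid Γ] (H : GammaHemiring S Γ)
    (μ ν : S → unitInterval) (x : S)
    {ι : Type} [Fintype ι] [Nonempty ι] (a : ι → S) (g : ι → Γ) (b c : ι → S) (e : ι → Γ)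
    (d : ι → S) (z : S)
    (heq : x + (∑ i, H.tri (a i) (g i) (b i)) + z = (∑ i, H.tri (c i) (e i) (d i)) + z) :
    (⨅ i, (μ (a i) ⊓ μ (c i)) ⊓ (ν (b i) ⊓ ν (d i))) ≤ H.hProdG μ ν x := by
  obtain ⟨n, hn⟩ : ∃ n, Fintype.card ι = n + 1 :=
    ⟨Fintype.card ι - 1, (Nat.succ_pred_eq_of_pos Fintype.card_pos).symm⟩
  let eqv : Fin (n + 1) ≃ ι := (Fintype.equivFinOfCardEq hn).symm
  have hsum1 : (∑ i, H.tri ((a ∘ eqv) i) ((g ∘ eqv) i) ((b ∘ eqv) i))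
      = ∑ i, H.tri (a i) (g i) (b i) := Equiv.sum_comp eqv fun i => H.tri (a i) (g i) (b i)
  have hsum2 : (∑ i, H.tri ((c ∘ eqv) i) ((e ∘ eqv) i) ((d ∘ eqv) i))
      = ∑ i, H.tri (c i) (e i) (d i) := Equiv.sum_comp eqv fun i => H.tri (c i) (e i) (d i)
  have key : x + (∑ i, H.tri ((a ∘ eqv) i) ((g ∘ eqv) i) ((b ∘ eqv) i)) + z
      = (∑ i, H.tri ((c ∘ eqv) i) ((e ∘ eqv) i) ((d ∘ eqv) i)) + z := by
    rw [hsum1, hsum2]; exact heq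
  refine le_trans (le_iInf fun j => iInf_le _ (eqv j))
    (le_iSup (fun e : H.GExpr x => ⨅ i, (μ (e.a i) ⊓ μ (e.c i)) ⊓ (ν (e.b i) ⊓ ν (e.d i)))
      ⟨n, a ∘ eqv, g ∘ eqv, b ∘ eqv, c ∘ eqv, e ∘ eqv, d ∘ eqv, z, key⟩)

namespace GammaHemiring

variable {S Γ : Type} [AddCommMonoid S] [AddCommMonoid Γ] (H : GammaHemiring S Γ)

lemma lActQ_zero (t : S) : H.lActQ 0 t = 0 := H.lAct_zero t

lemma lActQ_arg_zero (X : H.LOp) : H.lActQ X 0 = 0 :=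
  Quotient.inductionOn X fun v => H.lAct_arg_zero v

lemma plusPrime_le (σ : S → unitInterval) (X : H.LOp) (t : S) :
    H.plusPrime σ X ≤ σ (H.lActQ X t) :=
  Quotient.inductionOn X (fun v => iInf_le (fun s => σ (H.lAct v s)) t)

lemma plusPrime_le_zero (σ : S → unitInterval) (X : H.LOp) :
    H.plusPrime σ X ≤ σ 0 := by
  have h := H.plusPrime_le σ X 0
  rwa [H.lActQ_arg_zero] at h

lemma lActQ_expand {l : List (S × Γ)} (hEl : ∀ a, H.lAct (↑l : Multiset (S × Γ)) a = a)
    (X : H.LOp) (w : S) :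
    ∑ j : Fin l.length, H.tri (H.lActQ X l[(j : ℕ)].1) l[(j : ℕ)].2 w = H.lActQ X w :=
  Quotient.inductionOn X fun v => H.lAct_expand hEl v w

/-- First direction: every `HExpr` of `lMk u` in `L` gives, for every `s`, a lower bound
for `hProdG μ ν (lAct u s)`. -/
lemma part2_aux {l : List (S × Γ)} (hEl : ∀ a, H.lAct (↑l : Multiset (S × Γ)) a = a)
    (μ ν : S → unitInterval) (u : Multiset (S × Γ)) (e : HExpr H.LOp (H.lMk u)) (s : S) :
    (⨅ i, (H.plusPrime μ (e.a i) ⊓ H.plusPrime μ (e.c i)) ⊓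
        (H.plusPrime ν (e.b i) ⊓ H.plusPrime ν (e.d i)))
      ≤ H.hProdG μ ν (H.lAct u s) := by
  refine le_trans ?_
    (le_hProdG_of H μ ν (H.lAct u s) (ι := Option (Fin (e.n + 1) × Fin l.length))
      (fun o => o.elim 0 fun x => H.lActQ (e.a x.1) l[(x.2 : ℕ)].1)
      (fun o => o.elim 0 fun x => l[(x.2 : ℕ)].2)
      (fun o => o.elim 0 fun x => H.lActQ (e.b x.1) s)
      (fun o => o.elim 0 fun x => H.lActQ (e.c x.1) l[(x.2 : ℕ)].1)
      (fun o => o.elim 0 fun x => l[(x.2 : ℕ)].2)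
      (fun o => o.elim 0 fun x => H.lActQ (e.d x.1) s)
      (H.lActQ e.z s) ?_)
  · -- the value bound
    refine le_iInf ?_
    rintro (_ | x)
    · refine le_trans (iInf_le _ 0) ?_
      simp only [Option.elim]
      exact inf_le_inf
        (inf_le_inf (H.plusPrime_le_zero μ _) (H.plusPrime_le_zero μ _))
        (inf_le_inf (H.plusPrime_le_zero ν _) (H.plusPrime_le_zero ν _))
    · refine le_trans (iInf_le _ x.1) ?_
      simp only [Option.elim]
      exact inf_le_inf
        (inf_le_inf (H.plusPrime_le μ _ _) (H.plusPrime_le μ _ _))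
        (inf_le_inf (H.plusPrime_le ν _ _) (H.plusPrime_le ν _ _))
  · -- the expression equation
    have h := congrArg (H.lActQHom s) e.eq
    simp only [map_add, map_sum, lActQHom_apply] at h
    rw [Fintype.sum_option, Fintype.sum_option, Fintype.sum_prod_type, Fintype.sum_prod_type]
    simp only [Option.elim, H.zero_mid, zero_add]
    have hred : ∀ X Y : H.LOp,
        (∑ j : Fin l.length, H.tri (H.lActQ X l[(j : ℕ)].1) l[(j : ℕ)].2 (H.lActQ Y s))
          = H.lActQ (X * Y) s := by
      intro X Y
      rw [H.lActQ_expand hEl, H.lActQ_mul]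
    simp only [Finset.sum_comm (γ := Fin l.length)] at *
    simp only [hred]
    exact h

/-- Second direction: a family of `GExpr`s of `lAct u eⱼ` (for the left-unity components `eⱼ`)
combines into an `HExpr` of `lMk u` in `L`. -/
lemma part1_aux {l : List (S × Γ)} (hEl : ∀ a, H.lAct (↑l : Multiset (S × Γ)) a = a)
    (μ ν : S → unitInterval) (hμ : H.IsGFuzzyHIdeal μ) (hν : H.IsGFuzzyHIdeal ν)
    (u : Multiset (S × Γ)) (c : unitInterval)
    (hc0 : c < μ 0 ⊓ ν 0)
    (N : Fin l.length → ℕ)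
    (a : ∀ j : Fin l.length, Fin (N j + 1) → S)
    (g : ∀ j : Fin l.length, Fin (N j + 1) → Γ)
    (b : ∀ j : Fin l.length, Fin (N j + 1) → S)
    (c' : ∀ j : Fin l.length, Fin (N j + 1) → S)
    (e : ∀ j : Fin l.length, Fin (N j + 1) → Γ)
    (d : ∀ j : Fin l.length, Fin (N j + 1) → S)
    (z : Fin l.length → S)
    (heq : ∀ j : Fin l.length,
      H.lAct u l[(j : ℕ)].1 + (∑ i, H.tri (a j i) (g j i) (b j i)) + z j
        = (∑ i, H.tri (c' j i) (e j i) (d j i)) + z j)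
    (hval : ∀ (j : Fin l.length) (i : Fin (N j + 1)),
      c < (μ (a j i) ⊓ μ (c' j i)) ⊓ (ν (b j i) ⊓ ν (d j i))) :
    c < hProdH (H.plusPrime μ) (H.plusPrime ν) (H.lMk u) := by
  classical
  set κ := Option ((j : Fin l.length) × Fin (N j + 1)) with hκ
  set V : κ → unitInterval := fun o =>
    (H.plusPrime μ (o.elim 0 fun x => H.lMk {(a x.1 x.2, g x.1 x.2)}) ⊓
      H.plusPrime μ (o.elim 0 fun x => H.lMk {(c' x.1 x.2, e x.1 x.2)})) ⊓
    (H.plusPrime ν (o.elim 0 fun x => H.lMk {(b x.1 x.2, l[(x.1 : ℕ)].2)}) ⊓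
      H.plusPrime ν (o.elim 0 fun x => H.lMk {(d x.1 x.2, l[(x.1 : ℕ)].2)})) with hV
  have hVlt : ∀ o : κ, c < V o := by
    rintro (_ | x)
    · refine lt_of_lt_of_le hc0 ?_
      simp only [hV, Option.elim]
      rw [H.plusPrime_zero, H.plusPrime_zero]
      exact le_inf (inf_le_left.trans (le_inf le_rfl le_rfl))
        (inf_le_right.trans (le_inf le_rfl le_rfl))
    · refine lt_of_lt_of_le (hval x.1 x.2) ?_
      simp only [hV, Option.elim]
      exact inf_le_inf
        (inf_le_inf (H.le_plusPrime_single hμ _ _) (H.le_plusPrime_single hμ _ _))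
        (inf_le_inf (H.le_plusPrime_single hν _ _) (H.le_plusPrime_single hν _ _))
  have heqL : H.lMk u
        + (∑ o : κ, (o.elim 0 fun x => H.lMk {(a x.1 x.2, g x.1 x.2)})
            * (o.elim 0 fun x => H.lMk {(b x.1 x.2, l[(x.1 : ℕ)].2)}))
        + (∑ j : Fin l.length, H.lMk {(z j, l[(j : ℕ)].2)})
      = (∑ o : κ, (o.elim 0 fun x => H.lMk {(c' x.1 x.2, e x.1 x.2)})
            * (o.elim 0 fun x => H.lMk {(d x.1 x.2, l[(x.1 : ℕ)].2)}))
        + (∑ j : Fin l.length, H.lMk {(z j, l[(j : ℕ)].2)}) := by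
    apply H.lActQ_ext
    intro t
    change H.lActQHom t _ = H.lActQHom t _
    erw [map_add, map_add, map_add, map_sum, map_sum, map_sum]
    simp only [lActQHom_apply]
    rw [Fintype.sum_option, Fintype.sum_option]
    simp only [Option.elim, zero_mul, H.lActQ_zero, zero_add,
      H.lActQ_mul, H.lActQ_mk, H.lAct_singleton_s10]
    rw [← Finset.univ_sigma_univ, Finset.sum_sigma, Finset.sum_sigma]
    have key : ∀ j : Fin l.length,
        H.tri (H.lAct u l[(j : ℕ)].1) l[(j : ℕ)].2 t
          + (∑ i, H.tri (a j i) (g j i) (H.tri (b j i) l[(j : ℕ)].2 t))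
          + H.tri (z j) l[(j : ℕ)].2 t
        = (∑ i, H.tri (c' j i) (e j i) (H.tri (d j i) l[(j : ℕ)].2 t))
          + H.tri (z j) l[(j : ℕ)].2 t := by
      intro j
      have h := congrArg (H.triHom l[(j : ℕ)].2 t) (heq j)
      simp only [map_add, map_sum, triHom_apply, ← H.tri_assoc] at h
      exact h
    have hsum : (∑ j : Fin l.length,
          (H.tri (H.lAct u l[(j : ℕ)].1) l[(j : ℕ)].2 t
            + (∑ i, H.tri (a j i) (g j i) (H.tri (b j i) l[(j : ℕ)].2 t))
            + H.tri (z j) l[(j : ℕ)].2 t))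
        = ∑ j : Fin l.length,
          ((∑ i, H.tri (c' j i) (e j i) (H.tri (d j i) l[(j : ℕ)].2 t))
            + H.tri (z j) l[(j : ℕ)].2 t) :=
      Finset.sum_congr rfl fun j _ => key j
    simp only [Finset.sum_add_distrib] at hsum
    rw [H.lAct_expand hEl u t] at hsum
    simpa using hsum
  obtain ⟨o₀, -, ho₀⟩ := Finset.exists_min_image (Finset.univ : Finset κ) V
    ⟨none, Finset.mem_univ _⟩
  have hfin : c < ⨅ o : κ, V o :=
    lt_of_lt_of_le (hVlt o₀) (le_iInf fun o => ho₀ o (Finset.mem_univ o))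
  exact hfin.trans_le (le_hProdH_of (H.plusPrime μ) (H.plusPrime ν) (H.lMk u) _ _ _ _ _ heqL)

end GammaHemiring

/-- for fuzzy h-ideals `μ`, `ν` of `S` (with left and right unities),
`(μ ∘_h ν)⁺′ = μ⁺′ ∘_h ν⁺′`. -/
theorem plusPrime_hProd {S Γ : Type} [AddCommMonoid S] [AddCommMonoid Γ]
    (H : GammaHemiring S Γ)
    (E : Multiset (S × Γ)) (hE : H.IsLeftUnity E)
    (E' : Multiset (Γ × S)) (hE' : H.IsRightUnity E')
    (μ ν : S → unitInterval) (hμ : H.IsGFuzzyHIdeal μ) (hν : H.IsGFuzzyHIdeal ν) :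
    H.plusPrime (H.hProdG μ ν) = hProdH (H.plusPrime μ) (H.plusPrime ν) := by
  classical
  funext X
  refine Quotient.inductionOn X fun u => ?_
  have hEl : ∀ a, H.lAct (↑E.toList : Multiset (S × Γ)) a = a := by
    intro a; rw [Multiset.coe_toList]; exact hE a
  apply le_antisymm
  · -- `(μ ∘ ν)⁺′ ≤ μ⁺′ ∘ ν⁺′`
    refine le_of_forall_lt fun c hc => ?_
    have hlt : ∀ s : S, c < H.hProdG μ ν (H.lAct u s) := fun s =>
      lt_of_lt_of_le hc (iInf_le (fun s => H.hProdG μ ν (H.lAct u s)) s)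
    have hex : ∀ s : S, ∃ e : H.GExpr (H.lAct u s),
        c < ⨅ i, (μ (e.a i) ⊓ μ (e.c i)) ⊓ (ν (e.b i) ⊓ ν (e.d i)) := by
      intro s
      have h := hlt s
      rw [GammaHemiring.hProdG] at h
      exact lt_iSup_iff.mp h
    choose ge hge using hex
    have hc0 : c < μ 0 ⊓ ν 0 := by
      refine lt_of_lt_of_le ((hge 0).trans_le (iInf_le _ 0)) ?_
      exact le_inf
        ((inf_le_left.trans inf_le_left).trans (GammaHemiring.IsGFuzzyHIdeal.le_zero H hμ _))
        ((inf_le_right.trans inf_le_left).trans (GammaHemiring.IsGFuzzyHIdeal.le_zero H hν _))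
    exact H.part1_aux hEl μ ν hμ hν u c hc0
      (fun j => (ge E.toList[(j : ℕ)].1).n)
      (fun j => (ge E.toList[(j : ℕ)].1).a)
      (fun j => (ge E.toList[(j : ℕ)].1).g)
      (fun j => (ge E.toList[(j : ℕ)].1).b)
      (fun j => (ge E.toList[(j : ℕ)].1).c)
      (fun j => (ge E.toList[(j : ℕ)].1).e)
      (fun j => (ge E.toList[(j : ℕ)].1).d)
      (fun j => (ge E.toList[(j : ℕ)].1).z)
      (fun j => (ge E.toList[(j : ℕ)].1).eq)
      (fun j i => (hge E.toList[(j : ℕ)].1).trans_le (iInf_le _ i))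
  · -- `μ⁺′ ∘ ν⁺′ ≤ (μ ∘ ν)⁺′`
    refine iSup_le fun e => le_iInf fun s => ?_
    exact H.part2_aux hEl μ ν u e s
end
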